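/- Let Γᵏ = (ℤ/2ℤ)^{*k} be the k-fold free product of cyclic groups of order 2, k ≥ 3, acting transitively and faithfully on a countably infinite set X. Then for every 1 ≠ w ∈ Γᵏ, the set {y ∈ X : w·y ≠ y} is infinite. -/

import Mathlib

open Monoid.CoprodI

namespace FPnofin

variable {ι : Type*} {G : ι → Type*} [∀ i, Group (G i)] [DecidableEq ι]
  [∀ i, DecidableEq (G i)]

theorem word_prod_injective :
    Function.Injective (Word.prod : Word G → Monoid.CoprodI G) := by
  intro w₁ w₂ h
  have h1 : ∀ w : Word G, (Word.equiv (M := G)) w.prod = w := Word.equiv.right_inv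
  rw [← h1 w₁, ← h1 w₂, h]

theorem neword_prod_ne_one {i j : ι} (w : NeWord G i j) : w.prod ≠ 1 := by
  intro h
  have h2 : w.toWord = Word.empty := word_prod_injective (h.trans Word.prod_empty.symm)
  exact w.toList_ne_nil (congrArg Word.toList h2)

def repeatN {i j : ι} (w : NeWord G i j) (h : j ≠ i) : ℕ → NeWord G i j
  | 0 => w
  | n + 1 => NeWord.append (repeatN w h n) h w

theorem repeatN_prod {i j : ι} (w : NeWord G i j) (h : j ≠ i) (n : ℕ) :
    (repeatN w h n).prod = w.prod ^ (n + 1) := by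
  induction n with
  | zero => simp [repeatN]
  | succ n ih => rw [repeatN, NeWord.append_prod, ih, ← pow_succ]

theorem neword_pow_ne_one {i j : ι} (hij : i ≠ j) (w : NeWord G i j) {n : ℕ} (hn : n ≠ 0) :
    w.prod ^ n ≠ 1 := by
  obtain ⟨m, rfl⟩ : ∃ m, n = m + 1 := ⟨n - 1, by omega⟩
  rw [← repeatN_prod w hij.symm m]
  exact neword_prod_ne_one _

/-- The conclusion of the conjugacy classification. -/
def Conc (g : Monoid.CoprodI G) : Prop :=
  (∃ (i : ι) (m : G i) (h : Monoid.CoprodI G), m ≠ 1 ∧ g = h * of m * h⁻¹) ∨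
  (∃ (i j : ι) (_ : i ≠ j) (w : NeWord G i j) (h : Monoid.CoprodI G),
      g = h * w.prod * h⁻¹)

theorem conc_conj {g : Monoid.CoprodI G} (a : Monoid.CoprodI G) (H : Conc g) :
    Conc (a * g * a⁻¹) := by
  rcases H with ⟨i, m, h, hm, rfl⟩ | ⟨i, j, hij, w, h, rfl⟩
  · exact Or.inl ⟨i, m, a * h, hm, by group⟩
  · exact Or.inr ⟨i, j, hij, w, a * h, by group⟩

theorem conc_of_word :
    ∀ (n : ℕ) (w : Word G), w.toList.length ≤ n → w.prod ≠ 1 → Conc w.prod := by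
  intro n
  induction n with
  | zero =>
    intro w hlen hne
    exfalso
    apply hne
    have h0 : w.toList = [] := List.length_eq_zero_iff.mp (Nat.le_zero.mp hlen)
    have : w = Word.empty := Word.ext h0
    rw [this, Word.prod_empty]
  | succ n ih =>
    intro w hlen hne
    rcases hL : w.toList with _ | ⟨x, tl⟩
    · exfalso
      apply hne
      have : w = Word.empty := Word.ext hL
      rw [this, Word.prod_empty]
    rcases tl with _ | ⟨y, rest⟩
    · -- single letter
      have hprod : w.prod = of x.2 := by
        rw [Word.prod, hL]; simp
      have hx1 : x.2 ≠ 1 := w.ne_one x (by rw [hL]; simp)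
      exact Or.inl ⟨x.1, x.2, 1, hx1, by simp [hprod]⟩
    · obtain ⟨mid, b, hmb⟩ : ∃ mid b, y :: rest = mid ++ [b] := by
        rcases List.eq_nil_or_concat (y :: rest) with h | ⟨l', c, h⟩
        · simp at h
        · exact ⟨l', c, by rw [h, List.concat_eq_append]⟩
      rw [hmb] at hL
      -- now w.toList = x :: mid ++ [b]
      have hchain : (x :: (mid ++ [b])).Chain' (fun l l' => Sigma.fst l ≠ Sigma.fst l') := by
        rw [← hL]; exact w.chain_ne
      have hlen2 : mid.length + 2 ≤ n + 1 := by
        have := hlen; rw [hL] at this; simpa using this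
      have hprod : w.prod = of x.2 * ((mid.map fun l => of l.snd).prod * of b.2) := by
        rw [Word.prod, hL]; simp
      by_cases hidx : x.1 = b.1
      · obtain ⟨ix, mx⟩ := x
        obtain ⟨ib, mb⟩ := b
        dsimp at hidx
        subst hidx
        have hchain' : (mid ++ [(⟨ix, mb⟩ : Σ i, G i)]).Chain'
            (fun l l' => Sigma.fst l ≠ Sigma.fst l') := hchain.tail
        have hchmid : mid.Chain' (fun l l' => Sigma.fst l ≠ Sigma.fst l') :=
          (List.isChain_append.mp hchain').1
        have hjunct : ∀ l ∈ mid.getLast?, Sigma.fst l ≠ ix := by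
          intro l hl
          have := (List.isChain_append.mp hchain').2.2 l hl ⟨ix, mb⟩ rfl
          exact this
        have hneone : ∀ l ∈ mid, Sigma.snd l ≠ 1 := by
          intro l hl
          exact w.ne_one l (by rw [hL]; simp [hl])
        set P : Monoid.CoprodI G := (mid.map fun l => of l.snd).prod with hP
        have hkey : ∀ (w'' : Word G), w''.prod = P * of (mb * mx) →
            w''.toList.length ≤ n → Conc w.prod := by
          intro w'' hw'' hwlen
          have hconj : w.prod = of mx * w''.prod * (of mx)⁻¹ := by
            rw [hw'', hprod, map_mul]
            group
          have hne'' : w''.prod ≠ 1 := by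
            intro h1
            apply hne
            rw [hconj, h1, mul_one, mul_inv_cancel]
          have := ih w'' hwlen hne''
          rw [hconj]
          exact conc_conj _ this
        by_cases hone : mb * mx = 1
        · refine hkey ⟨mid, hneone, hchmid⟩ ?_ ?_
          · show (mid.map fun l => of l.snd).prod = P * of (mb * mx)
            rw [hone, map_one, mul_one]
          · show mid.length ≤ n
            omega
        · refine hkey ⟨mid ++ [(⟨ix, mb * mx⟩ : Σ i, G i)], ?_, ?_⟩ ?_ ?_
          · intro l hl
            rcases List.mem_append.mp hl with h1 | h1
            · exact hneone l h1
            · rw [List.mem_singleton.mp h1]; exact hone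
          · refine List.isChain_append.mpr ⟨hchmid, List.isChain_singleton _, ?_⟩
            intro l hl l' hl'
            simp only [List.head?_cons, Option.mem_def, Option.some_inj] at hl'
            subst hl'
            exact hjunct l hl
          · show ((mid ++ [(⟨ix, mb * mx⟩ : Σ i, G i)]).map fun l => of l.snd).prod = P * of (mb * mx)
            simp [hP]
          · show (mid ++ [(⟨ix, mb * mx⟩ : Σ i, G i)]).length ≤ n
            simp only [List.length_append, List.length_cons, List.length_nil]
            omega
      · -- cyclically reduced
        have hwne : w ≠ Word.empty := by
          intro h
          rw [h] at hL
          simp at hL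
        obtain ⟨i, j, w', hw'⟩ := NeWord.of_word w hwne
        have hlist : w'.toList = x :: (mid ++ [b]) := by
          rw [← hL]
          exact congrArg Word.toList hw'
        have hi : i = x.1 := by
          have h1 := w'.toList_head?
          rw [hlist] at h1
          simp only [List.head?_cons, Option.some_inj] at h1
          rw [h1]
        have hj : j = b.1 := by
          have h1 := w'.toList_getLast?
          rw [hlist] at h1
          have h2 : (x :: (mid ++ [b])).getLast? = some b := by
            rw [← List.cons_append]; exact List.getLast?_concat
          rw [h2, Option.some_inj] at h1
          rw [h1]
        have hij : i ≠ j := by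
          rw [hi, hj]; exact hidx
        have hprodeq : w'.prod = w.prod := by
          rw [NeWord.prod, hw']
        exact Or.inr ⟨i, j, hij, w', 1, by rw [hprodeq]; group⟩

theorem conc_of_ne_one (g : Monoid.CoprodI G) (hg : g ≠ 1) : Conc g := by
  have h1 : ((Word.equiv (M := G)) g).prod = g := Word.equiv.left_inv g
  rw [← h1]
  exact conc_of_word _ _ le_rfl (by rw [h1]; exact hg)

end FPnofin
namespace FPnofin

theorem isOfFinOrder_of_finite_support {Γ : Type*} [Group Γ] {X : Type*} [MulAction Γ X]
    (hfaith : ∀ g : Γ, (∀ x : X, g • x = x) → g = 1)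
    {S : Set X} (hS : S.Finite) {u : Γ} (hu : ∀ x ∉ S, u • x = x) : IsOfFinOrder u := by
  have hfix : ∀ (n : ℕ) (x : X), x ∉ S → u ^ n • x = x := by
    intro n
    induction n with
    | zero => intro x _; simp
    | succ n ih =>
      intro x hx
      rw [pow_succ, mul_smul, hu x hx]
      exact ih x hx
  have hmem : ∀ (n : ℕ) (x : X), x ∈ S → u ^ n • x ∈ S := by
    intro n x hx
    by_contra ht
    have h2 : u ^ n • (u ^ n • x) = u ^ n • x := hfix n _ ht
    have h3 : u ^ n • x = x := smul_left_cancel (u ^ n) h2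
    rw [h3] at ht
    exact ht hx
  haveI := hS.to_subtype
  obtain ⟨a, b, hab, hfeq⟩ := Finite.exists_ne_map_eq_of_infinite
    (fun n : ℕ => fun s : S => (⟨u ^ n • (s : X), hmem n s s.2⟩ : S))
  have key : ∀ a b : ℕ, a < b →
      ((fun s : S => (⟨u ^ a • (s : X), hmem a s s.2⟩ : S)) =
        (fun s : S => (⟨u ^ b • (s : X), hmem b s s.2⟩ : S))) → IsOfFinOrder u := by
    intro a b hlt heq
    have hall : ∀ x : X, u ^ a • x = u ^ b • x := by
      intro x
      by_cases hx : x ∈ S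
      · have := congrFun heq ⟨x, hx⟩
        exact congrArg Subtype.val this
      · rw [hfix a x hx, hfix b x hx]
    obtain ⟨d, rfl⟩ : ∃ d, b = a + d := ⟨b - a, by omega⟩
    have hd : d ≠ 0 := by omega
    have htriv : ∀ x : X, u ^ d • x = x := by
      intro x
      have := hall x
      rw [pow_add, mul_smul] at this
      exact (smul_left_cancel (u ^ a) this).symm
    rw [isOfFinOrder_iff_pow_eq_one]
    exact ⟨d, by omega, hfaith _ htriv⟩
  rcases hab.lt_or_gt with hlt | hlt
  · exact key a b hlt hfeq
  · exact key b a hlt hfeq.symm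

theorem conj_support_fix {Γ : Type*} [Group Γ] {X : Type*} [MulAction Γ X]
    (w g : Γ) (x : X) (hx : x ∉ (fun y => g • y) '' {y | w • y ≠ y}) :
    (g * w * g⁻¹) • x = x := by
  by_contra hne
  apply hx
  refine ⟨g⁻¹ • x, ?_, by simp⟩
  intro hfix
  apply hne
  rw [mul_smul, mul_smul, hfix]
  simp

end FPnofin

open FPnofin in
/-- For the `k`-fold free product `Γᵏ = (ℤ/2ℤ)^{*k}`, `k ≥ 3`, acting transitively and
faithfully on a countably infinite set `X`, every nontrivial element moves infinitely
many points. -/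
theorem free_product_no_finite_support (k : ℕ) (hk : 3 ≤ k) {X : Type*}
    [Countable X] [Infinite X]
    [MulAction (Monoid.CoprodI fun _ : Fin k => Multiplicative (ZMod 2)) X]
    (htrans : MulAction.IsPretransitive
      (Monoid.CoprodI fun _ : Fin k => Multiplicative (ZMod 2)) X)
    (hfaith : ∀ g : Monoid.CoprodI fun _ : Fin k => Multiplicative (ZMod 2),
      (∀ x : X, g • x = x) → g = 1) :
    ∀ w : Monoid.CoprodI fun _ : Fin k => Multiplicative (ZMod 2), w ≠ 1 →
      {y : X | w • y ≠ y}.Infinite := by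
  intro w hw
  by_contra hinf
  have hfin : {y : X | w • y ≠ y}.Finite := Set.not_infinite.mp hinf
  set A : Set X := {y : X | w • y ≠ y} with hA
  rcases conc_of_ne_one w hw with ⟨i, m, h, hm, hconj⟩ | ⟨i, j, hij, w', h, hconj⟩
  · -- w is conjugate to a generator
    obtain ⟨j, hji⟩ : ∃ j : Fin k, j ≠ i := by
      rcases Decidable.eq_or_ne i ⟨0, by omega⟩ with h0 | h0
      · exact ⟨⟨1, by omega⟩, by simp [h0, Fin.ext_iff]⟩
      · exact ⟨⟨0, by omega⟩, fun hh => h0 hh.symm⟩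
    set m' : Multiplicative (ZMod 2) := Multiplicative.ofAdd 1 with hm'def
    have hm' : m' ≠ (1 : Multiplicative (ZMod 2)) := by decide
    have hm'inv : m'⁻¹ = m' := by decide
    set a : Monoid.CoprodI fun _ : Fin k => Multiplicative (ZMod 2) :=
      Monoid.CoprodI.of (i := i) m with ha
    set b : Monoid.CoprodI fun _ : Fin k => Multiplicative (ZMod 2) :=
      Monoid.CoprodI.of (i := j) m' with hb
    have hbinv : b⁻¹ = b := by rw [hb, ← map_inv, hm'inv]
    set g : Monoid.CoprodI fun _ : Fin k => Multiplicative (ZMod 2) := h * b * h⁻¹ with hg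
    set u : Monoid.CoprodI fun _ : Fin k => Multiplicative (ZMod 2) :=
      w * (g * w * g⁻¹) with hudef
    -- u has finite support
    have hS : (A ∪ (fun y => g • y) '' A).Finite := hfin.union (hfin.image _)
    have hufix : ∀ x ∉ A ∪ (fun y => g • y) '' A, u • x = x := by
      intro x hx
      rw [Set.mem_union] at hx
      push_neg at hx
      have h1 : (g * w * g⁻¹) • x = x := conj_support_fix w g x hx.2
      have h2 : w • x = x := not_not.mp hx.1
      rw [hudef, mul_smul, h1, h2]
    have hufin : IsOfFinOrder u := isOfFinOrder_of_finite_support hfaith hS hufix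
    -- u = h * (a*b)^2 * h⁻¹
    have hu : u = h * ((a * b) * (a * b)) * h⁻¹ := by
      rw [hudef, hg, hconj, mul_inv_rev, mul_inv_rev, hbinv, inv_inv]
      group
    -- the NeWord a*b
    set nw : Monoid.CoprodI.NeWord (fun _ : Fin k => Multiplicative (ZMod 2)) i j :=
      Monoid.CoprodI.NeWord.append (Monoid.CoprodI.NeWord.singleton (i := i) m hm)
        hji.symm (Monoid.CoprodI.NeWord.singleton (i := j) m' hm') with hnw
    have hnwprod : nw.prod = a * b := by
      rw [hnw, Monoid.CoprodI.NeWord.append_prod, Monoid.CoprodI.NeWord.prod_singleton,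
        Monoid.CoprodI.NeWord.prod_singleton]
    obtain ⟨n, hn, hun⟩ := isOfFinOrder_iff_pow_eq_one.mp hufin
    have h1 : (h * ((a * b) * (a * b)) * h⁻¹) ^ n = h * ((a * b) * (a * b)) ^ n * h⁻¹ :=
      conj_pow
    have h2 : ((a * b) * (a * b)) ^ n = (a * b) ^ (2 * n) := by
      rw [← sq, ← pow_mul]
    have h3 : (a * b) ^ (2 * n) = 1 := by
      have := hun
      rw [hu, h1, h2] at this
      have h4 := congrArg (fun z => h⁻¹ * z * h) this
      simpa [mul_assoc] using h4
    have := neword_pow_ne_one hji.symm nw (n := 2 * n) (by omega)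
    rw [hnwprod] at this
    exact this h3
  · -- w is conjugate to a cyclically reduced word of length ≥ 2
    set e := w'.prod with he
    have hwconj : h⁻¹ * w * h⁻¹⁻¹ = e := by rw [hconj]; group
    have hS : ((fun y => h⁻¹ • y) '' A).Finite := hfin.image _
    have hefix : ∀ x ∉ (fun y => h⁻¹ • y) '' A, e • x = x := by
      intro x hx
      rw [← hwconj]
      exact conj_support_fix w h⁻¹ x hx
    have hefin : IsOfFinOrder e := isOfFinOrder_of_finite_support hfaith hS hefix
    obtain ⟨n, hn, hen⟩ := isOfFinOrder_iff_pow_eq_one.mp hefin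
    exact neword_pow_ne_one hij w' (n := n) (by omega) hen
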